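/- Let κ be an uncountable cardinal with cofinality ω and X a completely metrizable space with wt(X) = κ. If some closed subspace of X is not locally <κ-like, then cov(X) = cf([κ]^{ℵ₀}, ⊆), where cov(X) is the least cardinality of a covering of X by Polish subspaces. -/

import Mathlib

open Cardinal Set TopologicalSpace

/-- The weight of a topological space: the least cardinality of a basis. -/
noncomputable def tweight (X : Type*) [TopologicalSpace X] : Cardinal :=
  sInf { c | ∃ B : Set (Set X), IsTopologicalBasis B ∧ #B = c }

/-- A space is locally `<κ`-like if every nonempty open subset contains a nonempty
open subset of weight `< κ`. -/
def LocallyLtLike (Z : Type*) [TopologicalSpace Z] (κ : Cardinal) : Prop :=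
  ∀ U : Set Z, IsOpen U → U.Nonempty →
    ∃ V : Set Z, IsOpen V ∧ V.Nonempty ∧ V ⊆ U ∧ tweight V < κ

/-- The least cardinality of a covering of `X` by Polish subspaces. -/
noncomputable def covPolish (X : Type) [TopologicalSpace X] : Cardinal :=
  sInf { c | ∃ F : Set (Set X), (∀ Y ∈ F, PolishSpace Y) ∧ ⋃₀ F = Set.univ ∧ #F = c }

/-- The least cardinality of a family of countably infinite subsets of `A` that is
cofinal in `([A]^{ℵ₀}, ⊆)`. -/
noncomputable def cofCountableSubsets (A : Type*) : Cardinal :=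
  sInf { c | ∃ D : Set (Set A), (∀ s ∈ D, s.Countable ∧ s.Infinite) ∧
    (∀ t : Set A, t.Countable → t.Infinite → ∃ s ∈ D, t ⊆ s) ∧ #D = c }

lemma tweight_le_of_dense {Z : Type} [MetricSpace Z] {D : Set Z} (hD : Dense D) :
    tweight Z ≤ #D + ℵ₀ := by
  classical
  set f : D × ℕ → Set Z := fun p => Metric.ball (p.1 : Z) (1/(p.2+1)) with hf
  have hbasis : IsTopologicalBasis (range f) := by
    apply isTopologicalBasis_of_isOpen_of_nhds
    · rintro u ⟨p, rfl⟩; exact Metric.isOpen_ball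
    · intro a u ha hu
      obtain ⟨r, hr, hball⟩ := Metric.isOpen_iff.1 hu a ha
      obtain ⟨n, hn⟩ := exists_nat_one_div_lt (show (0:ℝ) < r/2 by linarith)
      obtain ⟨d, hd, hdd⟩ := Metric.dense_iff.1 hD a (1/(n+1)) (by positivity)
      refine ⟨f (⟨d, hdd⟩, n), ⟨_, rfl⟩, ?_, ?_⟩
      · have : dist d a < 1/(n+1) := Metric.mem_ball.1 hd
        simp only [f, Metric.mem_ball]
        rwa [dist_comm]
      · intro y hy
        apply hball
        have h1 : dist y d < 1/(n+1) := Metric.mem_ball.1 hy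
        have h2 : dist d a < 1/(n+1) := Metric.mem_ball.1 hd
        have : dist y a < 2/(n+1) := by
          calc dist y a ≤ dist y d + dist d a := dist_triangle _ _ _
          _ < 1/(n+1) + 1/(n+1) := by linarith
          _ = 2/(n+1) := by ring
        have : dist y a < r := by
          have : (2:ℝ)/(n+1) < r := by
            have : (1:ℝ)/(n+1) < r/2 := hn
            calc (2:ℝ)/(n+1) = 2 * (1/(n+1)) := by ring
            _ < 2 * (r/2) := by linarith
            _ = r := by ring
          linarith
        exact Metric.mem_ball.2 this
  have hcard : #(range f) ≤ #D + ℵ₀ := by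
    refine le_trans Cardinal.mk_range_le ?_
    have : #(D × ℕ) = #D * ℵ₀ := by simp [Cardinal.mk_prod]
    rw [this]
    calc #D * ℵ₀ ≤ max (max (#D) ℵ₀) ℵ₀ := Cardinal.mul_le_max _ _
    _ ≤ #D + ℵ₀ := by
        apply max_le (max_le ?_ ?_) ?_ <;> simp
  calc tweight Z ≤ #(range f) := csInf_le' ⟨range f, hbasis, rfl⟩
  _ ≤ #D + ℵ₀ := hcard


lemma tweight_subtype_le {Z : Type} [MetricSpace Z] (V S : Set Z) (hS : S ⊆ V)
    (hd : ∀ x ∈ V, ∀ ε > 0, ∃ s ∈ S, dist x s < ε) : tweight V ≤ #S + ℵ₀ := by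
  classical
  set S' : Set ↥V := {z | (z : Z) ∈ S}
  have hdense : Dense S' := by
    rw [Metric.dense_iff]
    intro x r hr
    obtain ⟨s, hs, hds⟩ := hd (x : Z) x.2 r hr
    exact ⟨⟨s, hS hs⟩, by simpa [Subtype.dist_eq, dist_comm] using hds, hs⟩
  have hcard : #S' ≤ #S := by
    refine Cardinal.mk_le_of_injective (f := fun z : S' => (⟨(z : ↥V), z.2⟩ : S)) ?_
    intro a b hab
    simp only [Subtype.mk.injEq] at hab
    exact Subtype.ext (Subtype.ext hab)
  calc tweight ↥V ≤ #S' + ℵ₀ := tweight_le_of_dense hdense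
  _ ≤ #S + ℵ₀ := by exact add_le_add_left hcard _

lemma exists_separated {Z : Type} [MetricSpace Z] {V : Set Z} (hne : V.Nonempty)
    {κ : Cardinal} (hκ : ℵ₀ < κ) (hwt : κ ≤ tweight V) (ι : Type) (hι : #ι < κ) :
    ∃ ε > 0, ∃ y : ι → Z, (∀ i, y i ∈ V) ∧ ∀ i j, i ≠ j → ε ≤ dist (y i) (y j) := by
  classical
  set c : Cardinal := #ι + ℵ₀ with hc
  have hcκ : c < κ := Cardinal.add_lt_of_lt hκ.le hι hκ
  have hcinf : ℵ₀ ≤ c := le_add_self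
  -- main claim: some (1/(q+1))-separated subset of V has size > c
  have main : ∃ q : ℕ, ∃ S : Set Z, S ⊆ V ∧
      (S.Pairwise fun a b => 1/(q+1:ℝ) ≤ dist a b) ∧ c < #S := by
    by_contra hcon
    push_neg at hcon
    -- for each q, a maximal separated set
    have hmax : ∀ q : ℕ, ∃ M : Set Z, M ⊆ V ∧
        (M.Pairwise fun a b => 1/(q+1:ℝ) ≤ dist a b) ∧
        ∀ x ∈ V, (∀ s ∈ M, 1/(q+1:ℝ) ≤ dist x s) → x ∈ M := by
      intro q
      set 𝒮 : Set (Set Z) := {S | S ⊆ V ∧ S.Pairwise fun a b => 1/(q+1:ℝ) ≤ dist a b}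
      have hzorn := zorn_subset_nonempty 𝒮 ?_ ∅ ⟨empty_subset _, pairwise_empty _⟩
      · obtain ⟨M, -, hM⟩ := hzorn
        refine ⟨M, hM.1.1, hM.1.2, ?_⟩
        intro x hx hsep
        by_contra hxM
        have : insert x M ∈ 𝒮 := by
          constructor
          · exact insert_subset hx hM.1.1
          · apply Set.Pairwise.insert hM.1.2
            intro b hb hxb
            constructor
            · exact hsep b hb
            · rw [dist_comm]; exact hsep b hb
        have := hM.2 this (subset_insert _ _)
        exact hxM (this (mem_insert _ _))
      · intro ch hch hchain hchne
        refine ⟨⋃₀ ch, ⟨?_, ?_⟩, fun s hs => subset_sUnion_of_mem hs⟩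
        · exact sUnion_subset fun s hs => (hch hs).1
        · intro a ha b hb hab
          obtain ⟨s, hs, has⟩ := ha
          obtain ⟨t, ht, hbt⟩ := hb
          rcases hchain.total hs ht with h | h
          · exact (hch ht).2 (h has) hbt hab
          · exact (hch hs).2 has (h hbt) hab
    choose M hMV hMsep hMmax using hmax
    set D : Set Z := ⋃ q, M q
    have hDcard : #D ≤ c := by
      refine le_trans (Cardinal.mk_iUnion_le _) ?_
      have h1 : ∀ q, #(M q) ≤ c := fun q => hcon q (M q) (hMV q) (hMsep q)
      calc #ℕ * ⨆ q, #(M q) ≤ ℵ₀ * c := by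
            apply mul_le_mul' (by simp) (ciSup_le h1)
      _ ≤ c * c := mul_le_mul' hcinf le_rfl
      _ = c := Cardinal.mul_eq_self hcinf
    have hdd : ∀ x ∈ V, ∀ ε > 0, ∃ s ∈ D, dist x s < ε := by
      intro x hx ε hε
      obtain ⟨q, hq⟩ := exists_nat_one_div_lt hε
      by_cases hxM : x ∈ M q
      · exact ⟨x, mem_iUnion.2 ⟨q, hxM⟩, by simpa using hε⟩
      · have : ¬ ∀ s ∈ M q, 1/(q+1:ℝ) ≤ dist x s := fun h => hxM (hMmax q x hx h)
        push_neg at this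
        obtain ⟨s, hs, hds⟩ := this
        exact ⟨s, mem_iUnion.2 ⟨q, hs⟩, lt_trans (by push_cast at hq ⊢; linarith) hq⟩
    have hDV : D ⊆ V := iUnion_subset hMV
    have := tweight_subtype_le V D hDV hdd
    have : tweight ↥V < κ := lt_of_le_of_lt (this.trans (by
      calc #D + ℵ₀ ≤ c + ℵ₀ := add_le_add_left hDcard _
      _ ≤ c + c := add_le_add_right hcinf _
      _ = c := Cardinal.add_eq_self hcinf)) hcκ
    exact absurd hwt this.not_ge
  obtain ⟨q, S, hSV, hsep, hcS⟩ := main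
  have hembed : #ι ≤ #S := le_of_lt (lt_of_le_of_lt le_self_add hcS)
  obtain ⟨f⟩ := Cardinal.le_def _ _ |>.1 hembed
  refine ⟨1/(q+1:ℝ), by positivity, fun i => (f i : Z), fun i => hSV (f i).2, ?_⟩
  intro i j hij
  exact hsep (f i).2 (f j).2 (fun h => hij (f.injective (Subtype.ext h)))


lemma sep_closure {M : Type} [MetricSpace M] {S S' : Set M} {ε : ℝ}
    (h : ∀ x ∈ S, ∀ y ∈ S', ε ≤ dist x y) :
    ∀ x ∈ closure S, ∀ y ∈ closure S', ε ≤ dist x y := by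
  intro x hx y hy
  by_contra hlt
  push_neg at hlt
  obtain ⟨x', hx', hdx⟩ := Metric.mem_closure_iff.1 hx ((ε - dist x y)/2) (by linarith)
  obtain ⟨y', hy', hdy⟩ := Metric.mem_closure_iff.1 hy ((ε - dist x y)/2) (by linarith)
  have h1 := h x' hx' y' hy'
  have h2 : dist x' y' ≤ dist x' x + dist x y + dist y y' := by
    calc dist x' y' ≤ dist x' y + dist y y' := dist_triangle _ _ _
    _ ≤ dist x' x + dist x y + dist y y' := by
        have := dist_triangle x' x y; linarith
  rw [dist_comm] at hdx
  linarith

lemma exists_Aset {A : Type} {κ : Cardinal} (hκ : ℵ₀ < κ) (hA : #A = κ)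
    (hcf : κ.ord.cof = ℵ₀) :
    ∃ Aset : ℕ → Set A, Monotone Aset ∧ (∀ a, ∃ n, a ∈ Aset n) ∧
      (∀ n, (Aset n).Nonempty) ∧ ∀ n, #(Aset n) < κ := by
  classical
  obtain ⟨r, wo, hr⟩ := Cardinal.ord_eq A
  rw [hA] at hr
  obtain ⟨S, hunb, hS⟩ := Ordinal.cof_eq' r (by rw [← hr]; exact Cardinal.isSuccLimit_ord hκ.le)
  rw [← hr, hcf] at hS
  have : Nonempty (↥S ≃ ℕ) := Cardinal.eq.1 (by rw [hS]; simp)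
  obtain ⟨g'⟩ := this
  set g : ℕ → ↥S := fun n => g'.symm n with hg
  have hseg : ∀ x : A, #{a : A | ¬ r x a} < κ := by
    intro x
    have hsub : {a : A | ¬ r x a} ⊆ insert x {a : A | r a x} := by
      intro a ha
      rcases trichotomous_of r a x with h1 | h1 | h1
      · exact Or.inr h1
      · exact Or.inl h1
      · exact absurd h1 ha
    have h1 : #{a : A | r a x} < κ := by
      have hct : #{a : A // r a x} = (Ordinal.typein r x).card := Ordinal.card_typein (r := r) x
      have h2 : Ordinal.typein r x < Ordinal.type r := Ordinal.typein_lt_type r x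
      rw [← hr] at h2
      have h3 : #{a : A // r a x} < κ := by rw [hct]; exact Cardinal.lt_ord.1 h2
      exact h3
    calc #{a : A | ¬ r x a} ≤ #(↥(insert x {a : A | r a x})) :=
          Cardinal.mk_le_mk_of_subset hsub
    _ ≤ #{a : A | r a x} + 1 := mk_insert_le
    _ < κ := add_lt_of_lt hκ.le h1 (lt_of_lt_of_le (by simp) hκ.le)
  refine ⟨fun n => {a | ∃ k ≤ n, ¬ r (↑(g k)) a}, ?_, ?_, ?_, ?_⟩
  · intro m n hmn a ha
    obtain ⟨k, hk, hka⟩ := ha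
    exact ⟨k, hk.trans hmn, hka⟩
  · intro a
    obtain ⟨b, hb, hba⟩ := hunb a
    refine ⟨g' ⟨b, hb⟩, g' ⟨b, hb⟩, le_rfl, ?_⟩
    have : g (g' ⟨b, hb⟩) = ⟨b, hb⟩ := g'.symm_apply_apply _
    rw [this]
    exact asymm hba
  · intro n
    exact ⟨↑(g 0), 0, Nat.zero_le _, irrefl_of r _⟩
  · intro n
    induction n with
    | zero =>
        have : {a : A | ∃ k ≤ 0, ¬ r (↑(g k)) a} ⊆ {a : A | ¬ r (↑(g 0)) a} := by
          rintro a ⟨k, hk, hka⟩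
          rw [Nat.le_zero.1 hk] at hka
          exact hka
        exact lt_of_le_of_lt (Cardinal.mk_le_mk_of_subset this) (hseg _)
    | succ n ih =>
        have hsub : {a : A | ∃ k ≤ n+1, ¬ r (↑(g k)) a} ⊆
            {a : A | ∃ k ≤ n, ¬ r (↑(g k)) a} ∪ {a : A | ¬ r (↑(g (n+1))) a} := by
          rintro a ⟨k, hk, hka⟩
          rcases Nat.lt_or_ge k (n+1) with h | h
          · exact Or.inl ⟨k, Nat.lt_succ_iff.1 h, hka⟩
          · exact Or.inr (by rwa [le_antisymm hk h] at hka)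
        calc #{a : A | ∃ k ≤ n+1, ¬ r (↑(g k)) a} ≤ _ := Cardinal.mk_le_mk_of_subset hsub
        _ ≤ #{a : A | ∃ k ≤ n, ¬ r (↑(g k)) a} + #{a : A | ¬ r (↑(g (n+1))) a} :=
            mk_union_le _ _
        _ < κ := add_lt_of_lt hκ.le ih (hseg _)


lemma exists_branch {A : Type} (Aset : ℕ → Set A) (hmono : Monotone Aset)
    (hcov : ∀ a, ∃ n, a ∈ Aset n) (hne : ∀ n, (Aset n).Nonempty)
    (t : Set A) (ht : t.Countable) :
    ∃ b : ∀ n, ↥(Aset n), t ⊆ range (fun n => (↑(b n) : A)) := by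
  classical
  rcases t.eq_empty_or_nonempty with rfl | htne
  · exact ⟨fun n => ⟨(hne n).choose, (hne n).choose_spec⟩, empty_subset _⟩
  obtain ⟨f, rfl⟩ := Set.Countable.exists_eq_range ht htne
  -- strictly monotone levels
  set m : ℕ → ℕ := fun k => Nat.rec ((hcov (f 0)).choose)
    (fun k mk => max ((hcov (f (k+1))).choose) (mk + 1)) k with hm
  have hmsucc : ∀ k, m k < m (k+1) := by
    intro k
    have : m (k+1) = max ((hcov (f (k+1))).choose) (m k + 1) := rfl
    rw [this]
    exact lt_of_lt_of_le (Nat.lt_succ_self _) (le_max_right _ _)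
  have hmstrict : StrictMono m := strictMono_nat_of_lt_succ hmsucc
  have hmem : ∀ k, f k ∈ Aset (m k) := by
    intro k
    cases k with
    | zero => exact (hcov (f 0)).choose_spec
    | succ k =>
        have : m (k+1) = max ((hcov (f (k+1))).choose) (m k + 1) := rfl
        rw [this]
        exact hmono (le_max_left _ _) (hcov (f (k+1))).choose_spec
  set b : ∀ n, ↥(Aset n) := fun n =>
    if h : ∃ k, m k = n then ⟨f h.choose, by have := hmem h.choose; rwa [h.choose_spec] at this⟩
    else ⟨(hne n).choose, (hne n).choose_spec⟩ with hb
  refine ⟨b, ?_⟩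
  rintro a ⟨k, rfl⟩
  refine ⟨m k, ?_⟩
  have hex : ∃ k', m k' = m k := ⟨k, rfl⟩
  have hval : (↑(b (m k)) : A) = f hex.choose := by
    show (↑(dite _ _ _ : ↥(Aset (m k))) : A) = _
    rw [dif_pos hex]
  have hk' : hex.choose = k := hmstrict.injective hex.choose_spec
  show (↑(b (m k)) : A) = f k
  rw [hval, hk']


lemma exists_scheme {M : Type} [MetricSpace M] [CompleteSpace M]
    {κ : Cardinal} (hκ : ℵ₀ < κ)
    {U : Set M} (hUopen : IsOpen U) (hUne : U.Nonempty)
    (H : ∀ V : Set M, IsOpen V → V.Nonempty → V ⊆ U → κ ≤ tweight V)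
    (C : ℕ → Type) (hC : ∀ n, #(C n) < κ) (hCne : ∀ n, Nonempty (C n)) :
    ∃ φ : (∀ n, C n) → M, ∀ b n, ∃ δ > 0, ∀ b',
      dist (φ b) (φ b') < δ → ∀ i < n, b' i = b i := by
  classical
  -- the key inductive step
  have key : ∀ n (g : {g : (∀ i : Fin n, C i) → Set M //
      ∀ σ, IsOpen (g σ) ∧ (g σ).Nonempty ∧ g σ ⊆ U ∧
        (n ≠ 0 → ∀ x ∈ g σ, ∀ y ∈ g σ, dist x y ≤ (1/2:ℝ)^n)}),
      ∃ g' : {g' : (∀ i : Fin (n+1), C i) → Set M //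
        ∀ τ, IsOpen (g' τ) ∧ (g' τ).Nonempty ∧ g' τ ⊆ U ∧
          (n+1 ≠ 0 → ∀ x ∈ g' τ, ∀ y ∈ g' τ, dist x y ≤ (1/2:ℝ)^(n+1))},
      ∀ σ : (i : Fin n) → C i.1, ∃ ε > 0, (∀ a : C n, g'.1 (Fin.snoc σ a) ⊆ g.1 σ) ∧
        ∀ a a' : C n, a ≠ a' → ∀ x ∈ g'.1 (Fin.snoc σ a), ∀ y ∈ g'.1 (Fin.snoc σ a'),
          ε ≤ dist x y := by
    intro n g
    have hsep : ∀ σ : (∀ i : Fin n, C i), ∃ ε > 0, ∃ y : C n → M,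
        (∀ a, y a ∈ g.1 σ) ∧ ∀ a a', a ≠ a' → ε ≤ dist (y a) (y a') := by
      intro σ
      obtain ⟨ho, hne, hsub, -⟩ := g.2 σ
      exact exists_separated hne hκ (H _ ho hne hsub) (C n) (hC n)
    choose ε hεpos y hyV hysep using hsep
    set r : (∀ i : Fin n, C i) → ℝ := fun σ => min (ε σ / 4) ((1/2:ℝ)^(n+1)/2) with hr
    have hrpos : ∀ σ, 0 < r σ := fun σ =>
      lt_min (by have := hεpos σ; linarith) (by positivity)
    have hrε : ∀ σ, r σ ≤ ε σ / 4 := fun σ => min_le_left _ _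
    have hrd : ∀ σ, r σ ≤ (1/2:ℝ)^(n+1)/2 := fun σ => min_le_right _ _
    set g'' : ((i : Fin (n+1)) → C i.1) → Set M := fun τ =>
      Metric.ball (y (Fin.init τ) (τ (Fin.last n))) (r (Fin.init τ)) ∩ g.1 (Fin.init τ)
      with hg''
    have hgood : ∀ τ, IsOpen (g'' τ) ∧ (g'' τ).Nonempty ∧ g'' τ ⊆ U ∧
        (n+1 ≠ 0 → ∀ x ∈ g'' τ, ∀ y ∈ g'' τ, dist x y ≤ (1/2:ℝ)^(n+1)) := by
      intro τ
      refine ⟨Metric.isOpen_ball.inter (g.2 _).1, ?_, ?_, ?_⟩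
      · exact ⟨y (Fin.init τ) (τ (Fin.last n)),
          Metric.mem_ball_self (hrpos _), hyV _ _⟩
      · exact (inter_subset_right).trans (g.2 _).2.2.1
      · intro _ x hx z hz
        have hx' := Metric.mem_ball.1 hx.1
        have hz' := Metric.mem_ball.1 hz.1
        have h3 := hrd (Fin.init τ)
        calc dist x z ≤ dist x (y (Fin.init τ) (τ (Fin.last n))) +
              dist (y (Fin.init τ) (τ (Fin.last n))) z := dist_triangle _ _ _
        _ ≤ r (Fin.init τ) + r (Fin.init τ) := by
            have hz'' : dist (y (Fin.init τ) (τ (Fin.last n))) z < r (Fin.init τ) := by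
              rw [dist_comm]; exact hz'
            exact add_le_add hx'.le hz''.le
        _ ≤ (1/2:ℝ)^(n+1) := by linarith
    refine ⟨⟨g'', hgood⟩, ?_⟩
    intro σ
    have hkey : ∀ a : C n, g'' (Fin.snoc σ a) = Metric.ball (y σ a) (r σ) ∩ g.1 σ := by
      intro a
      simp only [hg'']
      rw [Fin.init_snoc (α := fun i : Fin (n+1) => C i.1) a σ,
        Fin.snoc_last (α := fun i : Fin (n+1) => C i.1) a σ]
    refine ⟨ε σ / 2, by have := hεpos σ; linarith, ?_, ?_⟩
    · intro a x hx
      have hx' : x ∈ Metric.ball (y σ a) (r σ) ∩ g.1 σ := by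
        rw [← hkey a]; exact hx
      exact hx'.2
    · intro a a' haa x hx z hz
      have hx' : x ∈ Metric.ball (y σ a) (r σ) ∩ g.1 σ := by
        rw [← hkey a]; exact hx
      have hz' : z ∈ Metric.ball (y σ a') (r σ) ∩ g.1 σ := by
        rw [← hkey a']; exact hz
      clear hx hz
      have hsep1 := hysep σ a a' haa
      have hd1 : dist (y σ a) x < r σ := by
        rw [dist_comm]; exact Metric.mem_ball.1 hx'.1
      have hd2 : dist z (y σ a') < r σ := Metric.mem_ball.1 hz'.1
      have htri : dist (y σ a) (y σ a') ≤ dist (y σ a) x + dist x z + dist z (y σ a') := by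
        calc dist (y σ a) (y σ a') ≤ dist (y σ a) z + dist z (y σ a') := dist_triangle _ _ _
        _ ≤ dist (y σ a) x + dist x z + dist z (y σ a') := by
            have := dist_triangle (y σ a) x z; linarith
      have := hrε σ
      linarith
  -- build the scheme by recursion
  set F : ∀ n, {g : (∀ i : Fin n, C i) → Set M //
      ∀ σ, IsOpen (g σ) ∧ (g σ).Nonempty ∧ g σ ⊆ U ∧
        (n ≠ 0 → ∀ x ∈ g σ, ∀ y ∈ g σ, dist x y ≤ (1/2:ℝ)^n)} :=
    fun n => Nat.rec
      ⟨fun _ => U, fun _ => ⟨hUopen, hUne, subset_rfl, fun h => absurd rfl h⟩⟩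
      (fun n g => (key n g).choose) n with hF
  have hRel : ∀ n, ∀ σ : (i : Fin n) → C i.1, ∃ ε > 0,
      (∀ a : C n, (F (n+1)).1 (Fin.snoc σ a) ⊆ (F n).1 σ) ∧
      ∀ a a' : C n, a ≠ a' → ∀ x ∈ (F (n+1)).1 (Fin.snoc σ a),
        ∀ y ∈ (F (n+1)).1 (Fin.snoc σ a'), ε ≤ dist x y :=
    fun n => (key n (F n)).choose_spec
  -- restrictions
  set res : (∀ n, C n) → ∀ n, ∀ i : Fin n, C i := fun b n i => b i with hres
  have hsnoc : ∀ (b : ∀ n, C n) (n : ℕ),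
      res b (n+1) = Fin.snoc (res b n) (b n) := by
    intro b n
    funext i
    refine Fin.lastCases ?_ ?_ i
    · rw [Fin.snoc_last]
      rfl
    · intro j
      rw [Fin.snoc_castSucc]
      rfl
  have nested : ∀ (b : ∀ n, C n) (n : ℕ),
      (F (n+1)).1 (res b (n+1)) ⊆ (F n).1 (res b n) := by
    intro b n
    rw [hsnoc]
    obtain ⟨ε, hε, hsub, -⟩ := hRel n (res b n)
    exact hsub (b n)
  have chain : ∀ (b : ∀ n, C n) (n m : ℕ), n ≤ m →
      (F m).1 (res b m) ⊆ (F n).1 (res b n) := by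
    intro b n m hnm
    induction hnm with
    | refl => exact subset_rfl
    | step h ih => exact (nested b _).trans ih
  set p : (∀ n, C n) → ℕ → M := fun b n => ((F n).2 (res b n)).2.1.choose with hp
  have hpmem : ∀ b n, p b n ∈ (F n).1 (res b n) := fun b n => ((F n).2 (res b n)).2.1.choose_spec
  have hpmem' : ∀ b n m, n ≤ m → p b m ∈ (F n).1 (res b n) :=
    fun b n m h => chain b n m h (hpmem b m)
  have hcauchy : ∀ b, CauchySeq (p b) := by
    intro b
    rw [Metric.cauchySeq_iff']
    intro δ hδ
    obtain ⟨N, hN⟩ := exists_pow_lt_of_lt_one hδ (show (1/2:ℝ) < 1 by norm_num)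
    refine ⟨max N 1, ?_⟩
    intro n hn
    have h1 : p b n ∈ (F (max N 1)).1 (res b (max N 1)) := hpmem' b _ n hn
    have h2 : p b (max N 1) ∈ (F (max N 1)).1 (res b (max N 1)) := hpmem b _
    have h3 := ((F (max N 1)).2 (res b (max N 1))).2.2.2
      (Nat.one_le_iff_ne_zero.1 (le_max_right N 1)) (p b n) h1 (p b (max N 1)) h2
    have h4 : ((1:ℝ)/2)^(max N 1) ≤ (1/2:ℝ)^N :=
      pow_le_pow_of_le_one (by norm_num) (by norm_num) (le_max_left N 1)
    calc dist (p b n) (p b (max N 1)) ≤ (1/2:ℝ)^(max N 1) := h3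
    _ ≤ (1/2:ℝ)^N := h4
    _ < δ := hN
  -- the limit map
  have hlim : ∀ b, ∃ x : M, Filter.Tendsto (p b) Filter.atTop (nhds x) :=
    fun b => cauchySeq_tendsto_of_complete (hcauchy b)
  set φ : (∀ n, C n) → M := fun b => (hlim b).choose with hφ
  have htend : ∀ b, Filter.Tendsto (p b) Filter.atTop (nhds (φ b)) :=
    fun b => (hlim b).choose_spec
  have hclos : ∀ b n, φ b ∈ closure ((F n).1 (res b n)) := by
    intro b n
    refine mem_closure_of_tendsto (htend b) ?_
    filter_upwards [Filter.eventually_ge_atTop n] with m hm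
    exact hpmem' b n m hm
  refine ⟨φ, ?_⟩
  intro b n
  induction n with
  | zero => exact ⟨1, one_pos, fun b' _ i hi => absurd hi (Nat.not_lt_zero _)⟩
  | succ n ih =>
      obtain ⟨δ, hδ, hind⟩ := ih
      obtain ⟨ε, hε, hsub, hsep⟩ := hRel n (res b n)
      refine ⟨min δ ε, lt_min hδ hε, ?_⟩
      intro b' hdist i hi
      have hlt_δ : dist (φ b) (φ b') < δ := lt_of_lt_of_le hdist (min_le_left _ _)
      have heq : ∀ j, j < n → b' j = b j := hind b' hlt_δ
      rcases Nat.lt_or_ge i n with h | h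
      · exact heq i h
      · have hi_eq : i = n := le_antisymm (Nat.lt_succ_iff.1 hi) h
        subst hi_eq
        by_contra hne'
        have hresEq : res b' i = res b i := by
          funext j
          exact heq j j.2
        have h1 : φ b ∈ closure ((F (i+1)).1 (Fin.snoc (res b i) (b i))) := by
          rw [← hsnoc]; exact hclos b (i+1)
        have h2 : φ b' ∈ closure ((F (i+1)).1 (Fin.snoc (res b i) (b' i))) := by
          rw [← hresEq, ← hsnoc]; exact hclos b' (i+1)
        have hsep2 := hsep (b i) (b' i) (fun hh => hne' hh.symm)
        have hge : ε ≤ dist (φ b) (φ b') := sep_closure hsep2 _ h1 _ h2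
        have hlt_ε : dist (φ b) (φ b') < ε := lt_of_lt_of_le hdist (min_le_right _ _)
        linarith


/-- If `κ` is uncountable of cofinality `ω` and `X` is a completely metrizable
space of weight `κ` with a closed subspace that is not locally `<κ`-like, then
`cov(X) = cf([κ]^{ℵ₀}, ⊆)`. -/
theorem cov_eq_cof_of_not_locally_small (κ : Cardinal) (hκ : ℵ₀ < κ)
    (hcf : κ.ord.cof = ℵ₀) (A : Type) (hA : #A = κ)
    (X : Type) [MetricSpace X] [CompleteSpace X] (hw : tweight X = κ)
    (K : Set X) (hK : IsClosed K) (hnot : ¬ LocallyLtLike K κ) :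
    covPolish X = cofCountableSubsets A := by
  classical
  have hAinf : Infinite A := Cardinal.infinite_iff.2 (by rw [hA]; exact hκ.le)
  set s₀ : Set A := range (Infinite.natEmbedding A) with hs₀
  have hs₀c : s₀.Countable := countable_range _
  have hs₀i : s₀.Infinite := infinite_range_of_injective (Infinite.natEmbedding A).injective
  apply le_antisymm
  · -- upper bound: covPolish ≤ cofCountableSubsets
    have hDne : {c | ∃ D : Set (Set A), (∀ s ∈ D, s.Countable ∧ s.Infinite) ∧
        (∀ t : Set A, t.Countable → t.Infinite → ∃ s ∈ D, t ⊆ s) ∧ #D = c}.Nonempty :=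
      ⟨_, {s : Set A | s.Countable ∧ s.Infinite}, fun s hs => hs,
        fun t htc hti => ⟨t, ⟨htc, hti⟩, subset_rfl⟩, rfl⟩
    obtain ⟨D, hD1, hD2, hD3⟩ : ∃ D : Set (Set A), (∀ s ∈ D, s.Countable ∧ s.Infinite) ∧
        (∀ t : Set A, t.Countable → t.Infinite → ∃ s ∈ D, t ⊆ s) ∧
        #D = cofCountableSubsets A := csInf_mem hDne
    have hBne : {c | ∃ B : Set (Set X), IsTopologicalBasis B ∧ #B = c}.Nonempty :=
      ⟨_, {V : Set X | IsOpen V}, isTopologicalBasis_opens, rfl⟩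
    obtain ⟨B, hBbasis, hBcard⟩ : ∃ B : Set (Set X), IsTopologicalBasis B ∧ #B = tweight X :=
      csInf_mem hBne
    rw [hw] at hBcard
    obtain ⟨e⟩ : Nonempty (A ≃ ↥B) := Cardinal.eq.1 (hA.trans hBcard.symm)
    set Xs : Set A → Set X := fun s =>
      {x | ∀ W ∈ nhds x, ∃ a ∈ s, x ∈ (e a : Set X) ∧ (↑(e a) : Set X) ⊆ W} with hXs
    set Ys : Set A → Set X := fun s => closure (Xs s) with hYs
    have hPolish : ∀ s : Set A, s.Countable → PolishSpace ↥(Ys s) := by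
      intro s hsc
      have hsep : IsSeparable (Xs s) := by
        set pt : A → Set X := fun a =>
          if h : ((e a : Set X) ∩ Xs s).Nonempty then {h.choose} else ∅ with hpt
        have hptc : ∀ a, (pt a).Countable := by
          intro a
          by_cases h : ((e a : Set X) ∩ Xs s).Nonempty
          · simp [pt, h]
          · simp [pt, h]
        refine ⟨⋃ a ∈ s, pt a, hsc.biUnion fun a _ => hptc a, ?_⟩
        intro x hx
        rw [mem_closure_iff_nhds]
        intro t ht
        obtain ⟨a, has, hxa, hsub⟩ := hx t ht
        have hne : ((e a : Set X) ∩ Xs s).Nonempty := ⟨x, hxa, hx⟩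
        have hpa : pt a = {hne.choose} := dif_pos hne
        refine ⟨hne.choose, hsub hne.choose_spec.1, ?_⟩
        exact mem_biUnion has (by rw [hpa]; rfl)
      have hsepY : IsSeparable (Ys s) := hsep.closure
      haveI : SeparableSpace ↥(Ys s) := hsepY.separableSpace
      haveI : SecondCountableTopology ↥(Ys s) := UniformSpace.secondCountable_of_separable _
      haveI : CompleteSpace ↥(Ys s) := isClosed_closure.completeSpace_coe
      infer_instance
    have hcover : ∀ x : X, ∃ s ∈ D, x ∈ Ys s := by
      intro x
      have hx : ∀ n : ℕ, ∃ a : A, x ∈ (e a : Set X) ∧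
          (↑(e a) : Set X) ⊆ Metric.ball x (1/(n+1)) := by
        intro n
        have hself : x ∈ Metric.ball x (1/(n+1:ℝ)) :=
          Metric.mem_ball_self (by positivity)
        obtain ⟨v, hvB, hxv, hvsub⟩ := hBbasis.exists_subset_of_mem_open
          hself Metric.isOpen_ball
        refine ⟨e.symm ⟨v, hvB⟩, ?_, ?_⟩
        · rw [Equiv.apply_symm_apply]; exact hxv
        · rw [Equiv.apply_symm_apply]; exact hvsub
      choose a ha₁ ha₂ using hx
      have htc : (range a ∪ s₀).Countable := (countable_range a).union hs₀c
      have hti : (range a ∪ s₀).Infinite := hs₀i.mono subset_union_right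
      obtain ⟨s, hsD, hts⟩ := hD2 _ htc hti
      refine ⟨s, hsD, subset_closure ?_⟩
      intro W hW
      obtain ⟨r, hr, hball⟩ := Metric.nhds_basis_ball.mem_iff.1 hW
      obtain ⟨n, hn⟩ := exists_nat_one_div_lt hr
      refine ⟨a n, hts (Or.inl (mem_range_self n)), ha₁ n, ?_⟩
      exact (ha₂ n).trans ((Metric.ball_subset_ball hn.le).trans hball)
    have hmem : covPolish X ≤ #(Ys '' D) := by
      apply csInf_le'
      refine ⟨Ys '' D, ?_, ?_, rfl⟩
      · rintro Y ⟨s, hsD, rfl⟩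
        exact hPolish s (hD1 s hsD).1
      · apply eq_univ_of_forall
        intro x
        obtain ⟨s, hsD, hxs⟩ := hcover x
        exact ⟨Ys s, mem_image_of_mem Ys hsD, hxs⟩
    calc covPolish X ≤ #(Ys '' D) := hmem
    _ ≤ #D := Cardinal.mk_image_le
    _ = cofCountableSubsets A := hD3
  · -- lower bound: cofCountableSubsets ≤ covPolish
    have hFne : {c | ∃ F : Set (Set X), (∀ Y ∈ F, PolishSpace Y) ∧ ⋃₀ F = Set.univ ∧
        #F = c}.Nonempty := by
      refine ⟨_, range (fun x : X => ({x} : Set X)), ?_, ?_, rfl⟩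
      · rintro Y ⟨x, rfl⟩; infer_instance
      · exact eq_univ_of_forall fun x => ⟨{x}, mem_range_self x, rfl⟩
    obtain ⟨F, hF1, hF2, hF3⟩ : ∃ F : Set (Set X), (∀ Y ∈ F, PolishSpace Y) ∧
        ⋃₀ F = Set.univ ∧ #F = covPolish X := csInf_mem hFne
    simp only [LocallyLtLike] at hnot
    push_neg at hnot
    obtain ⟨U, hUo, hUne, hUbad⟩ := hnot
    have H : ∀ V : Set ↥K, IsOpen V → V.Nonempty → V ⊆ U → κ ≤ tweight ↥V := hUbad
    haveI : CompleteSpace ↥K := hK.completeSpace_coe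
    obtain ⟨Aset, hmono, hcov, hAne, hAcard⟩ := exists_Aset hκ hA hcf
    obtain ⟨φ, hφ⟩ := exists_scheme hκ hUo hUne H (fun n => ↥(Aset n))
      (fun n => hAcard n) (fun n => (hAne n).to_subtype)
    -- trap sets
    have htrap : ∀ Y : ↥F, ∃ u : Set A, u.Countable ∧
        ∀ b : ∀ n, ↥(Aset n), (↑(φ b) : X) ∈ (Y : Set X) → ∀ n, (↑(b n) : A) ∈ u := by
      intro Y
      haveI hPol : PolishSpace ↥(Y : Set X) := hF1 Y Y.2
      haveI : SecondCountableTopology ↥(Y : Set X) := hPol.toSecondCountableTopology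
      obtain ⟨Cd, hCdc, hCdd⟩ := TopologicalSpace.exists_countable_dense ↥(Y : Set X)
      haveI := hCdc.to_subtype
      set SY : Set (∀ n, ↥(Aset n)) := {b | (↑(φ b) : X) ∈ (Y : Set X)} with hSY
      set sel : ↥Cd × ℕ → Set (∀ n, ↥(Aset n)) := fun p =>
        if h : ∃ b ∈ SY, dist (↑(φ b) : X) ((p.1 : ↥(Y : Set X)) : X) < 1/(p.2+1)
        then {h.choose} else ∅ with hsel
      have hselc : (⋃ p : ↥Cd × ℕ, sel p).Countable := by
        apply countable_iUnion
        intro p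
        by_cases h : ∃ b ∈ SY, dist (↑(φ b) : X) ((p.1 : ↥(Y : Set X)) : X) < 1/(p.2+1)
        · have hp : sel p = {h.choose} := dif_pos h
          rw [hp]; exact countable_singleton _
        · have hp : sel p = ∅ := dif_neg h
          rw [hp]; exact countable_empty
      refine ⟨⋃ z ∈ (⋃ p : ↥Cd × ℕ, sel p), range (fun n => (↑(z n) : A)), ?_, ?_⟩
      · exact hselc.biUnion fun z _ => countable_range _
      · intro b hb n
        obtain ⟨δ, hδ, hP⟩ := hφ b (n+1)
        obtain ⟨q, hq⟩ := exists_nat_one_div_lt (show (0:ℝ) < δ/2 by linarith)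
        have hbY : (⟨↑(φ b), hb⟩ : ↥(Y : Set X)) ∈ closure Cd := by
          rw [hCdd.closure_eq]; trivial
        obtain ⟨c, hcC, hcd⟩ := Metric.mem_closure_iff.1 hbY (1/(q+1)) (by positivity)
        have hcdX : dist (↑(φ b) : X) ((c : ↥(Y : Set X)) : X) < 1/(q+1) := by
          rw [Subtype.dist_eq] at hcd
          exact hcd
        have hex : ∃ b' ∈ SY, dist (↑(φ b') : X) ((c : ↥(Y : Set X)) : X) < 1/(q+1) :=
          ⟨b, hb, hcdX⟩
        have hzsel : sel (⟨c, hcC⟩, q) = {hex.choose} := dif_pos hex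
        obtain ⟨hzSY, hzd⟩ := hex.choose_spec
        have hdd : dist (φ b) (φ hex.choose) < δ := by
          rw [Subtype.dist_eq]
          calc dist (↑(φ b) : X) (↑(φ hex.choose) : X) ≤
              dist (↑(φ b) : X) ((c : ↥(Y : Set X)) : X) +
              dist ((c : ↥(Y : Set X)) : X) (↑(φ hex.choose) : X) := dist_triangle _ _ _
          _ < 1/(q+1) + 1/(q+1) := by
              rw [dist_comm ((c : ↥(Y : Set X)) : X)]
              exact add_lt_add hcdX hzd
          _ < δ := by
              have : (1:ℝ)/(q+1) < δ/2 := hq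
              linarith
        have hzn : hex.choose n = b n := hP hex.choose hdd n (Nat.lt_succ_self n)
        have hzmem : hex.choose ∈ ⋃ p : ↥Cd × ℕ, sel p :=
          mem_iUnion.2 ⟨(⟨c, hcC⟩, q), by rw [hzsel]; rfl⟩
        exact mem_biUnion hzmem ⟨n, by show (↑(hex.choose n) : A) = ↑(b n); rw [hzn]⟩
    choose u huc hutrap using htrap
    have hmem2 : cofCountableSubsets A ≤ #(range (fun Y : ↥F => u Y ∪ s₀)) := by
      apply csInf_le'
      refine ⟨range (fun Y : ↥F => u Y ∪ s₀), ?_, ?_, rfl⟩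
      · rintro s ⟨Y, rfl⟩
        exact ⟨(huc Y).union hs₀c, hs₀i.mono subset_union_right⟩
      · intro t htc hti
        obtain ⟨b, hb⟩ := exists_branch Aset hmono hcov hAne t htc
        have hmem3 : (↑(φ b) : X) ∈ ⋃₀ F := by rw [hF2]; trivial
        obtain ⟨Y, hYF, hbY⟩ := hmem3
        refine ⟨u ⟨Y, hYF⟩ ∪ s₀, mem_range_self _, hb.trans ?_⟩
        rintro x ⟨n, rfl⟩
        exact Or.inl (hutrap ⟨Y, hYF⟩ b hbY n)
    calc cofCountableSubsets A ≤ #(range (fun Y : ↥F => u Y ∪ s₀)) := hmem2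
    _ ≤ #↥F := Cardinal.mk_range_le
    _ = covPolish X := hF3
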